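/- First-term bound in the proof of Lemma 3.3: there exists a constant C > 0 independent of N such that for every N ≥ 1, every multiplier m_N as in the context, and every v ∈ H^{1/2}(ℝ;ℂ), one has | Im ∫_ℝ ( \overline{I_N v} · ∂_x(I_N v) − \overline{v} · ∂_x v ) dx | ≤ C N^{−1} ‖I_N v‖_{H^1}². -/

import Mathlib

open MeasureTheory Real Complex
open scoped FourierTransform

noncomputable section

/-- `m` is an I-method multiplier at level `N`: a smooth, even, radially
nonincreasing function with `0 < m(ξ) ≤ 1`, `m(ξ) = 1` for `|ξ| ≤ N`, and
`m(ξ) = N^{1/2} |ξ|^{-1/2}` for `|ξ| > 2N`. -/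
def IsIMultiplier (N : ℝ) (m : ℝ → ℝ) : Prop :=
  ContDiff ℝ (⊤ : ℕ∞) m ∧
  (∀ ξ : ℝ, m (-ξ) = m ξ) ∧
  (∀ ξ η : ℝ, |ξ| ≤ |η| → m η ≤ m ξ) ∧
  (∀ ξ : ℝ, 0 < m ξ ∧ m ξ ≤ 1) ∧
  (∀ ξ : ℝ, |ξ| ≤ N → m ξ = 1) ∧
  (∀ ξ : ℝ, 2 * N < |ξ| → m ξ = N ^ ((1 : ℝ) / 2) * |ξ| ^ (-(1 : ℝ) / 2))

/-- The `Hˢ` norm computed from a given Fourier transform `g`: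
`(∫ (1+|ξ|²)^s ‖g(ξ)‖² dξ)^{1/2}`. -/
def sobNormOfHat (s : ℝ) (g : ℝ → ℂ) : ℝ :=
  (∫ ξ : ℝ, (1 + |ξ| ^ 2) ^ s * ‖g ξ‖ ^ 2) ^ ((1 : ℝ) / 2)

/-- First-term bound in the proof of Lemma 3.3: there is `C > 0`, independent
of `N`, such that for all `N ≥ 1`, all multipliers `m = m_N`, and all
`v ∈ H^{1/2}(ℝ;ℂ)`,
`|Im ∫ (I_N v)‾ ∂_x(I_N v) - v̄ ∂_x v dx| ≤ C N⁻¹ ‖I_N v‖_{H¹}²`, where, with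
the Fourier normalization for which Plancherel's theorem holds,
`Im ∫ w̄ ∂_x w dx = 2π ∫ ξ ‖ŵ(ξ)‖² dξ`, which is well defined for
`w ∈ H^{1/2}`. -/
theorem modified_momentum_first_term :
    ∃ C : ℝ, 0 < C ∧
      ∀ N : ℝ, 1 ≤ N → ∀ m : ℝ → ℝ, IsIMultiplier N m → ∀ v : ℝ → ℂ,
        Integrable (fun ξ : ℝ => (1 + |ξ| ^ 2) ^ ((1 : ℝ) / 2) * ‖𝓕 v ξ‖ ^ 2) →
          |2 * π * (∫ ξ : ℝ, ξ * ‖(m ξ : ℂ) * 𝓕 v ξ‖ ^ 2) -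
              2 * π * (∫ ξ : ℝ, ξ * ‖𝓕 v ξ‖ ^ 2)| ≤
            C * N⁻¹ * sobNormOfHat 1 (fun ξ : ℝ => (m ξ : ℂ) * 𝓕 v ξ) ^ 2 := by
  refine ⟨4 * π, by positivity, ?_⟩
  intro N hN m hm v hv
  obtain ⟨hsmooth, -, hmono, hpos, heq1, heqtail⟩ := hm
  have hNpos : (0 : ℝ) < N := lt_of_lt_of_le one_pos hN
  set g : ℝ → ℝ := fun ξ => ‖𝓕 v ξ‖ ^ 2 with hgdef
  have hg0 : ∀ ξ, 0 ≤ g ξ := fun ξ => sq_nonneg _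
  -- the norm of the multiplied Fourier transform
  have hnorm : ∀ ξ, ‖(m ξ : ℂ) * 𝓕 v ξ‖ ^ 2 = m ξ ^ 2 * g ξ := by
    intro ξ
    rw [norm_mul, mul_pow, Complex.norm_real, Real.norm_eq_abs,
      abs_of_pos (hpos ξ).1]
  -- sqrt weight
  set S : ℝ → ℝ := fun ξ => Real.sqrt (1 + ξ ^ 2) with hSdef
  have hScont : Continuous S := (continuous_const.add (continuous_pow 2)).sqrt
  have hSsq : ∀ ξ, S ξ ^ 2 = 1 + ξ ^ 2 := fun ξ => Real.sq_sqrt (by positivity)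
  have hSpos : ∀ ξ, 0 < S ξ := fun ξ => Real.sqrt_pos.2 (by positivity)
  have hS1 : ∀ ξ, (1 : ℝ) ≤ S ξ := fun ξ => by
    nlinarith [hSsq ξ, hSpos ξ, sq_nonneg ξ]
  have hSabs : ∀ ξ, |ξ| ≤ S ξ := fun ξ => by
    nlinarith [hSsq ξ, hSpos ξ, _root_.sq_abs ξ, abs_nonneg ξ]
  have hSrpow : ∀ ξ : ℝ, (1 + |ξ| ^ 2) ^ ((1 : ℝ) / 2) = S ξ := fun ξ => by
    rw [_root_.sq_abs]; exact (Real.sqrt_eq_rpow _).symm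
  -- the integrability hypothesis in terms of S
  have hvS : Integrable (fun ξ => S ξ * g ξ) := by
    have : (fun ξ : ℝ => (1 + |ξ| ^ 2) ^ ((1 : ℝ) / 2) * ‖𝓕 v ξ‖ ^ 2)
        = fun ξ => S ξ * g ξ := funext fun ξ => by rw [hSrpow ξ]
    rwa [this] at hv
  -- measurability of g
  have hgm : AEStronglyMeasurable g (volume : Measure ℝ) := by
    have h1 : AEStronglyMeasurable (fun ξ => (S ξ * g ξ) * (S ξ)⁻¹) volume :=
      hvS.aestronglyMeasurable.mul
        ((hScont.inv₀ fun ξ => (hSpos ξ).ne').aestronglyMeasurable)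
    refine h1.congr (Filter.Eventually.of_forall fun ξ => ?_)
    show S ξ * g ξ * (S ξ)⁻¹ = g ξ
    rw [mul_comm (S ξ), mul_inv_cancel_right₀ (hSpos ξ).ne']
  -- squared value of the multiplier in the tail
  have hpow : ∀ x : ℝ, 0 < x →
      (N ^ ((1 : ℝ) / 2) * x ^ (-(1 : ℝ) / 2)) ^ 2 = N / x := by
    intro x hx
    rw [mul_pow, ← Real.rpow_natCast (N ^ ((1 : ℝ) / 2)) 2,
      ← Real.rpow_natCast (x ^ (-(1 : ℝ) / 2)) 2,
      ← Real.rpow_mul hNpos.le, ← Real.rpow_mul hx.le]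
    norm_num
    rw [Real.rpow_neg_one, div_eq_mul_inv]
  -- lower bound on m² past N
  have hmsq : ∀ ξ : ℝ, N < |ξ| → N / (2 * |ξ|) ≤ m ξ ^ 2 := by
    intro ξ hξ
    have hξ0 : 0 < |ξ| := lt_trans hNpos hξ
    have habs2 : _root_.abs (2 * _root_.abs ξ) = 2 * _root_.abs ξ := _root_.abs_of_nonneg (by positivity)
    have h2 : m (2 * |ξ|) ≤ m ξ := hmono ξ (2 * |ξ|) (by rw [habs2]; nlinarith)
    have h3 : m (2 * |ξ|) = N ^ ((1 : ℝ) / 2) * (2 * |ξ|) ^ (-(1 : ℝ) / 2) := by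
      have h := heqtail (2 * |ξ|) (by rw [habs2]; nlinarith)
      rwa [habs2] at h
    have h4 : (m (2 * |ξ|)) ^ 2 ≤ m ξ ^ 2 := by
      have h0 : 0 ≤ m (2 * |ξ|) := (hpos _).1.le
      nlinarith
    calc N / (2 * |ξ|) = (N ^ ((1 : ℝ) / 2) * (2 * |ξ|) ^ (-(1 : ℝ) / 2)) ^ 2 :=
          (hpow (2 * |ξ|) (by positivity)).symm
      _ = (m (2 * |ξ|)) ^ 2 := by rw [h3]
      _ ≤ m ξ ^ 2 := h4
  -- key pointwise bound
  have hpt : ∀ ξ : ℝ, |ξ * (m ξ ^ 2 * g ξ) - ξ * g ξ|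
      ≤ 2 * N⁻¹ * ((1 + ξ ^ 2) * (m ξ ^ 2 * g ξ)) := by
    intro ξ
    have hm0 : 0 < m ξ := (hpos ξ).1
    have hm1 : m ξ ≤ 1 := (hpos ξ).2
    have habs : |ξ * (m ξ ^ 2 * g ξ) - ξ * g ξ| = |ξ| * (1 - m ξ ^ 2) * g ξ := by
      have : ξ * (m ξ ^ 2 * g ξ) - ξ * g ξ = -(ξ * ((1 - m ξ ^ 2) * g ξ)) := by ring
      rw [this, abs_neg, _root_.abs_mul, _root_.abs_of_nonneg (mul_nonneg (by nlinarith : (0:ℝ) ≤ 1 - m ξ ^ 2) (hg0 ξ))]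
      ring
    rw [habs]
    have hscalar : |ξ| * (1 - m ξ ^ 2) ≤ 2 * N⁻¹ * ((1 + ξ ^ 2) * m ξ ^ 2) := by
      rcases le_or_gt |ξ| N with h | h
      · rw [heq1 ξ h]; norm_num; positivity
      · have hξ0 : 0 < |ξ| := lt_trans hNpos h
        have hq := hmsq ξ h
        have hq' : N ≤ 2 * |ξ| * m ξ ^ 2 := by
          rw [div_le_iff₀ (by positivity)] at hq; linarith [hq]
        rw [← mul_le_mul_iff_of_pos_left hNpos]
        have hNN : N * N⁻¹ = 1 := mul_inv_cancel₀ hNpos.ne'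
        have : N * (2 * N⁻¹ * ((1 + ξ ^ 2) * m ξ ^ 2))
            = 2 * ((1 + ξ ^ 2) * m ξ ^ 2) := by
          field_simp
        rw [this]
        nlinarith [mul_le_mul_of_nonneg_left hq' (abs_nonneg ξ), _root_.sq_abs ξ,
          sq_nonneg (m ξ), mul_nonneg (mul_nonneg hNpos.le hξ0.le) (sq_nonneg (m ξ))]
    calc |ξ| * (1 - m ξ ^ 2) * g ξ
        ≤ 2 * N⁻¹ * ((1 + ξ ^ 2) * m ξ ^ 2) * g ξ :=
          mul_le_mul_of_nonneg_right hscalar (hg0 ξ)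
      _ = 2 * N⁻¹ * ((1 + ξ ^ 2) * (m ξ ^ 2 * g ξ)) := by ring
  -- bound used for integrability of the H¹ integrand
  have hbig : ∀ ξ : ℝ, (1 + ξ ^ 2) * m ξ ^ 2 ≤ (1 + 2 * N) * S ξ := by
    intro ξ
    have hm0 : 0 < m ξ := (hpos ξ).1
    have hm1 : m ξ ≤ 1 := (hpos ξ).2
    rcases le_or_gt |ξ| (2 * N) with h | h
    · have hle : S ξ ≤ 1 + |ξ| := by
        nlinarith [hSsq ξ, hSpos ξ, _root_.sq_abs ξ, abs_nonneg ξ, hS1 ξ]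
      have hm2 : m ξ ^ 2 ≤ 1 := by nlinarith
      calc (1 + ξ ^ 2) * m ξ ^ 2 ≤ (1 + ξ ^ 2) * 1 :=
            mul_le_mul_of_nonneg_left hm2 (by positivity)
        _ = S ξ * S ξ := by rw [← hSsq ξ]; ring
        _ ≤ (1 + 2 * N) * S ξ :=
            mul_le_mul_of_nonneg_right (by linarith) (hSpos ξ).le
    · have hξ0 : 0 < |ξ| := lt_trans (by positivity) h
      have hmsqeq : m ξ ^ 2 = N / |ξ| := by
        rw [heqtail ξ h]; exact hpow |ξ| hξ0
      rw [hmsqeq, ← mul_div_assoc, div_le_iff₀ hξ0]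
      nlinarith [hSabs ξ, hS1 ξ, _root_.sq_abs ξ, mul_le_mul_of_nonneg_left (hSabs ξ) hξ0.le,
        mul_le_mul_of_nonneg_left (hS1 ξ) (hSpos ξ).le, sq_nonneg (|ξ| - 2 * N)]
  -- integrability facts
  have hsm : AEStronglyMeasurable (fun ξ : ℝ => m ξ ^ 2 * g ξ) volume :=
    ((hsmooth.continuous.pow 2).aestronglyMeasurable).mul hgm
  have hI2 : Integrable (fun ξ : ℝ => ξ * g ξ) := by
    refine hvS.mono (aestronglyMeasurable_id.mul hgm)
      (Filter.Eventually.of_forall fun ξ => ?_)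
    simp only [Real.norm_eq_abs, _root_.abs_mul, _root_.abs_of_nonneg (hg0 ξ),
      _root_.abs_of_nonneg (hSpos ξ).le]
    exact mul_le_mul_of_nonneg_right (hSabs ξ) (hg0 ξ)
  have hI1 : Integrable (fun ξ : ℝ => ξ * (m ξ ^ 2 * g ξ)) := by
    refine hvS.mono (aestronglyMeasurable_id.mul hsm)
      (Filter.Eventually.of_forall fun ξ => ?_)
    have hm1 : m ξ ≤ 1 := (hpos ξ).2
    have hm0 : 0 ≤ m ξ := (hpos ξ).1.le
    simp only [Real.norm_eq_abs, _root_.abs_mul, _root_.abs_of_nonneg (hg0 ξ),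
      _root_.abs_of_nonneg (hSpos ξ).le, _root_.abs_of_nonneg (sq_nonneg (m ξ))]
    calc |ξ| * (m ξ ^ 2 * g ξ) ≤ |ξ| * (1 * g ξ) := by
          refine mul_le_mul_of_nonneg_left ?_ (abs_nonneg ξ)
          exact mul_le_mul_of_nonneg_right (by nlinarith) (hg0 ξ)
      _ = |ξ| * g ξ := by ring
      _ ≤ S ξ * g ξ := mul_le_mul_of_nonneg_right (hSabs ξ) (hg0 ξ)
  have hI3 : Integrable (fun ξ : ℝ => (1 + ξ ^ 2) * (m ξ ^ 2 * g ξ)) := by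
    refine (hvS.const_mul (1 + 2 * N)).mono
      (((continuous_const.add (continuous_pow 2)).aestronglyMeasurable).mul hsm)
      (Filter.Eventually.of_forall fun ξ => ?_)
    have h1 : (0:ℝ) ≤ (1 + ξ ^ 2) * (m ξ ^ 2 * g ξ) := by positivity
    have h2 : (0:ℝ) ≤ (1 + 2 * N) * (S ξ * g ξ) := by
      have := hSpos ξ; have := hg0 ξ; positivity
    simp only [Real.norm_eq_abs, _root_.abs_of_nonneg h1, _root_.abs_of_nonneg h2]
    calc (1 + ξ ^ 2) * (m ξ ^ 2 * g ξ) = ((1 + ξ ^ 2) * m ξ ^ 2) * g ξ := by ring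
      _ ≤ ((1 + 2 * N) * S ξ) * g ξ := mul_le_mul_of_nonneg_right (hbig ξ) (hg0 ξ)
      _ = (1 + 2 * N) * (S ξ * g ξ) := by ring
  -- rewrite the goal integrals
  simp only [hnorm]
  -- rewrite the Sobolev norm squared
  set J : ℝ := ∫ ξ : ℝ, (1 + ξ ^ 2) * (m ξ ^ 2 * g ξ) with hJdef
  have hJ0 : 0 ≤ J := integral_nonneg fun ξ => by positivity
  have hsob : sobNormOfHat 1 (fun ξ : ℝ => (m ξ : ℂ) * 𝓕 v ξ) ^ 2 = J := by
    unfold sobNormOfHat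
    have heqf : (fun ξ : ℝ => (1 + |ξ| ^ 2) ^ (1 : ℝ) * ‖(m ξ : ℂ) * 𝓕 v ξ‖ ^ 2)
        = fun ξ : ℝ => (1 + ξ ^ 2) * (m ξ ^ 2 * g ξ) := by
      funext ξ
      rw [Real.rpow_one, _root_.sq_abs, hnorm ξ]
    rw [heqf, ← hJdef, ← Real.rpow_natCast (J ^ ((1:ℝ)/2)) 2, ← Real.rpow_mul hJ0]
    norm_num
  rw [hsob]
  -- main estimate
  have hsub : (∫ ξ : ℝ, ξ * (m ξ ^ 2 * g ξ)) - (∫ ξ : ℝ, ξ * g ξ)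
      = ∫ ξ : ℝ, (ξ * (m ξ ^ 2 * g ξ) - ξ * g ξ) := (integral_sub hI1 hI2).symm
  have htwo_pi : (0:ℝ) < 2 * π := by positivity
  calc |2 * π * (∫ ξ : ℝ, ξ * (m ξ ^ 2 * g ξ)) - 2 * π * (∫ ξ : ℝ, ξ * g ξ)|
      = 2 * π * |∫ ξ : ℝ, (ξ * (m ξ ^ 2 * g ξ) - ξ * g ξ)| := by
        rw [← mul_sub, abs_mul, abs_of_pos htwo_pi, hsub]
    _ ≤ 2 * π * ∫ ξ : ℝ, |ξ * (m ξ ^ 2 * g ξ) - ξ * g ξ| := by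
        refine mul_le_mul_of_nonneg_left ?_ htwo_pi.le
        simpa [Real.norm_eq_abs] using
          norm_integral_le_integral_norm (μ := volume)
            (fun ξ : ℝ => ξ * (m ξ ^ 2 * g ξ) - ξ * g ξ)
    _ ≤ 2 * π * ∫ ξ : ℝ, 2 * N⁻¹ * ((1 + ξ ^ 2) * (m ξ ^ 2 * g ξ)) := by
        refine mul_le_mul_of_nonneg_left ?_ htwo_pi.le
        exact integral_mono (hI1.sub hI2).abs (hI3.const_mul _) hpt
    _ = 4 * π * N⁻¹ * J := by
        rw [MeasureTheory.integral_const_mul, ← hJdef]; ring
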